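/- Let m, n ≥ 1 and consider two LCQP instances (A, b, ∘, c, Q, l, u) and (Â, b̂, ∘̂, ĉ, Q̂, l̂, û) with m constraints and n variables each, where Q and Q̂ are symmetric positive semidefinite. Suppose there exist a partition I = {I_1,…,I_s} of {1,…,m} and a partition J = {J_1,…,J_t} of {1,…,n} such that: (i) (b_i, ∘_i) = (b̂_i, ∘̂_i) for all i and (b_i, ∘_i) is constant over i in each class I_p; (ii) (c_j, l_j, u_j) = (ĉ_j, l̂_j, û_j) for all j and (c_j, l_j, u_j) is constant over j in each class J_q; (iii) for every p, q and every i ∈ I_p, ∑_{j∈J_q} A_{ij} = ∑_{j∈J_q} Â_{ij}, and this common value is the same for all i ∈ I_p; (iv) for every p, q and every j ∈ J_q, ∑_{i∈I_p} A_{ij} = ∑_{i∈I_p} Â_{ij}, and this common value is the same for all j ∈ J_q; (v) for every q, q' and every j ∈ J_q, ∑_{j'∈J_{q'}} Q_{jj'} = ∑_{j'∈J_{q'}} Q̂_{jj'}, and this common value is the same for all j ∈ J_q. Then the two instances have the same optimal value in ℝ∪{±∞}. -/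

import Mathlib

open Matrix

/-- Comparison symbols `≤`, `=`, `≥` for linear constraints. -/
inductive CmpOp : Type
  | le : CmpOp
  | eq : CmpOp
  | ge : CmpOp

/-- `CmpOp.holds o a b` means `a ∘ b` where `∘` is the comparison symbol `o`. -/
def CmpOp.holds : CmpOp → ℝ → ℝ → Prop
  | .le, a, b => a ≤ b
  | .eq, a, b => a = b
  | .ge, a, b => a ≥ b

/-- Feasibility of `x` for linear constraints `Ax ∘ b`, `l ≤ x ≤ u`, where
`l ∈ (ℝ∪{−∞})^n` and `u ∈ (ℝ∪{+∞})^n` and the bound inequalities are in the extended reals. -/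
def LinFeasible {m n : ℕ} (A : Matrix (Fin m) (Fin n) ℝ) (b : Fin m → ℝ)
    (o : Fin m → CmpOp) (l : Fin n → WithBot ℝ) (u : Fin n → WithTop ℝ)
    (x : Fin n → ℝ) : Prop :=
  (∀ i, (o i).holds (A.mulVec x i) (b i)) ∧
    (∀ j, l j ≤ (x j : WithBot ℝ)) ∧ (∀ j, (x j : WithTop ℝ) ≤ u j)

/-- The optimal value `inf_{x ∈ X} (1/2) xᵀQx + cᵀx ∈ ℝ∪{±∞}` of an LCQP instance,
understood as `+∞` when the feasible set `X` is empty. -/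
noncomputable def LCQPValue {m n : ℕ} (A : Matrix (Fin m) (Fin n) ℝ) (b : Fin m → ℝ)
    (o : Fin m → CmpOp) (c : Fin n → ℝ) (Q : Matrix (Fin n) (Fin n) ℝ)
    (l : Fin n → WithBot ℝ) (u : Fin n → WithTop ℝ) : EReal :=
  sInf ((fun x => (((1 / 2) * (x ⬝ᵥ Q.mulVec x) + c ⬝ᵥ x : ℝ) : EReal)) ''
    {x | LinFeasible A b o l u x})

namespace LCQPAux

open Matrix

variable {k t : ℕ}

/-- The class of `q` under the partition map `π`. -/
def cls (π : Fin k → Fin t) (q : Fin t) : Finset (Fin k) :=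
  Finset.univ.filter (fun j => π j = q)

lemma mem_cls {π : Fin k → Fin t} {q : Fin t} {j : Fin k} :
    j ∈ cls π q ↔ π j = q := by simp [cls]

lemma cls_card_pos {π : Fin k → Fin t} (hπ : Function.Surjective π) (q : Fin t) :
    0 < ((cls π q).card : ℝ) := by
  have : (cls π q).Nonempty := by
    obtain ⟨j, hj⟩ := hπ q
    exact ⟨j, mem_cls.2 hj⟩
  exact_mod_cast Finset.card_pos.2 this

/-- The averaging projection matrix of a partition map. -/
noncomputable def P (π : Fin k → Fin t) : Matrix (Fin k) (Fin k) ℝ :=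
  fun j j' => if π j = π j' then (1 : ℝ) / (cls π (π j)).card else 0

lemma P_symm (π : Fin k → Fin t) : (P π)ᵀ = P π := by
  ext j j'
  show (if π j' = π j then (1:ℝ)/(cls π (π j')).card else 0)
      = if π j = π j' then (1:ℝ)/(cls π (π j)).card else 0
  by_cases h : π j = π j'
  · rw [if_pos h.symm, if_pos h, h]
  · rw [if_neg (Ne.symm h), if_neg h]

lemma sum_eq_sum_cls (π : Fin k → Fin t) (g : Fin k → ℝ) (q : Fin t) :
    (∑ j', if π j' = q then g j' else 0) = ∑ j' ∈ cls π q, g j' :=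
  (Finset.sum_filter _ _).symm

lemma mulVec_P_apply (π : Fin k → Fin t) (x : Fin k → ℝ) (j : Fin k) :
    (P π).mulVec x j = (∑ j' ∈ cls π (π j), x j') / (cls π (π j)).card := by
  simp only [Matrix.mulVec, dotProduct, P]
  have key : ∀ j' : Fin k, (if π j = π j' then (1:ℝ)/(cls π (π j)).card else 0) * x j'
       = if π j' = π j then x j' / ((cls π (π j)).card : ℝ) else 0 := by
    intro j'
    by_cases h : π j = π j'
    · rw [if_pos h, if_pos h.symm]; ring
    · rw [if_neg h, if_neg (Ne.symm h), zero_mul]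
  rw [Finset.sum_congr rfl fun j' _ => key j',
    sum_eq_sum_cls π (fun j' => x j' / ((cls π (π j)).card : ℝ)) (π j), Finset.sum_div]

lemma P_classConst (π : Fin k → Fin t) (x : Fin k → ℝ) {j j₂ : Fin k}
    (h : π j = π j₂) : (P π).mulVec x j = (P π).mulVec x j₂ := by
  rw [mulVec_P_apply, mulVec_P_apply, h]

lemma P_fix {π : Fin k → Fin t} (hπ : Function.Surjective π) {v : Fin k → ℝ}
    (hv : ∀ j j₂, π j = π j₂ → v j = v j₂) : (P π).mulVec v = v := by
  funext j
  rw [mulVec_P_apply]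
  rw [Finset.sum_congr rfl (fun j' hj' => hv j' j (mem_cls.1 hj')), Finset.sum_const,
    nsmul_eq_mul]
  exact mul_div_cancel_left₀ _ (ne_of_gt (cls_card_pos hπ (π j)))

lemma dot_P (π : Fin k → Fin t) (v x : Fin k → ℝ) :
    v ⬝ᵥ (P π).mulVec x = (P π).mulVec v ⬝ᵥ x := by
  rw [Matrix.dotProduct_mulVec, ← Matrix.mulVec_transpose, P_symm]

lemma dot_const_P {π : Fin k → Fin t} (hπ : Function.Surjective π) {v : Fin k → ℝ}
    (hv : ∀ j j₂, π j = π j₂ → v j = v j₂) (x : Fin k → ℝ) :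
    v ⬝ᵥ (P π).mulVec x = v ⬝ᵥ x := by
  rw [dot_P, P_fix hπ hv]

/-- Averaging preserves a constraint. -/
lemma holds_avg (o : CmpOp) (b : ℝ) (S : Finset (Fin k)) (hS : 0 < (S.card : ℝ))
    (f : Fin k → ℝ) (h : ∀ i ∈ S, o.holds (f i) b) :
    o.holds ((∑ i ∈ S, f i) / S.card) b := by
  cases o with
  | le =>
    rw [CmpOp.holds, div_le_iff₀ hS]
    calc ∑ i ∈ S, f i ≤ ∑ _i ∈ S, b := Finset.sum_le_sum h
    _ = b * S.card := by rw [Finset.sum_const, nsmul_eq_mul]; ring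
  | eq =>
    rw [CmpOp.holds, div_eq_iff (ne_of_gt hS)]
    calc ∑ i ∈ S, f i = ∑ _i ∈ S, b := Finset.sum_congr rfl h
    _ = b * S.card := by rw [Finset.sum_const, nsmul_eq_mul]; ring
  | ge =>
    rw [CmpOp.holds, ge_iff_le, le_div_iff₀ hS]
    calc b * S.card = ∑ _i ∈ S, b := by rw [Finset.sum_const, nsmul_eq_mul]; ring
    _ ≤ ∑ i ∈ S, f i := Finset.sum_le_sum h

end LCQPAux

namespace LCQPAux

lemma AP_entry {m n t : ℕ} (π : Fin n → Fin t) (A : Matrix (Fin m) (Fin n) ℝ)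
    (i : Fin m) (j : Fin n) :
    (A * P π) i j = (∑ j' ∈ cls π (π j), A i j') / (cls π (π j)).card := by
  rw [Matrix.mul_apply]
  have key : ∀ j' : Fin n, A i j' * P π j' j
      = if π j' = π j then A i j' / ((cls π (π j)).card : ℝ) else 0 := by
    intro j'
    by_cases h : π j' = π j
    · show A i j' * (if π j' = π j then (1:ℝ)/(cls π (π j')).card else 0) = _
      rw [if_pos h, if_pos h, h]; ring
    · show A i j' * (if π j' = π j then (1:ℝ)/(cls π (π j')).card else 0) = _
      rw [if_neg h, if_neg h, mul_zero]
  rw [Finset.sum_congr rfl fun j' _ => key j',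
    sum_eq_sum_cls π (fun j' => A i j' / ((cls π (π j)).card : ℝ)) (π j), Finset.sum_div]

lemma PA_entry {m n s : ℕ} (σ : Fin m → Fin s) (A : Matrix (Fin m) (Fin n) ℝ)
    (i : Fin m) (j : Fin n) :
    (P σ * A) i j = (∑ i' ∈ cls σ (σ i), A i' j) / (cls σ (σ i)).card := by
  rw [Matrix.mul_apply]
  have key : ∀ i' : Fin m, P σ i i' * A i' j
      = if σ i' = σ i then A i' j / ((cls σ (σ i)).card : ℝ) else 0 := by
    intro i'
    by_cases h : σ i = σ i'
    · show (if σ i = σ i' then (1:ℝ)/(cls σ (σ i)).card else 0) * A i' j = _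
      rw [if_pos h, if_pos h.symm]; ring
    · show (if σ i = σ i' then (1:ℝ)/(cls σ (σ i)).card else 0) * A i' j = _
      rw [if_neg h, if_neg (Ne.symm h), zero_mul]
  rw [Finset.sum_congr rfl fun i' _ => key i',
    sum_eq_sum_cls σ (fun i' => A i' j / ((cls σ (σ i)).card : ℝ)) (σ i), Finset.sum_div]

/-- `A ⋅ P_π = P_σ ⋅ A` given the constancy conditions. -/
lemma AP_eq_PA {m n s t : ℕ} {σ : Fin m → Fin s} (hσ : Function.Surjective σ)
    {π : Fin n → Fin t} (hπ : Function.Surjective π)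
    (A : Matrix (Fin m) (Fin n) ℝ)
    (hArowConst : ∀ (q : Fin t) (i i₂ : Fin m), σ i = σ i₂ →
      ∑ j' ∈ cls π q, A i j' = ∑ j' ∈ cls π q, A i₂ j')
    (hAcolConst : ∀ (p : Fin s) (j j₂ : Fin n), π j = π j₂ →
      ∑ i' ∈ cls σ p, A i' j = ∑ i' ∈ cls σ p, A i' j₂) :
    A * P π = P σ * A := by
  ext i j
  rw [AP_entry, PA_entry]
  have hN := cls_card_pos hπ (π j)
  have hM := cls_card_pos hσ (σ i)
  rw [div_eq_div_iff (ne_of_gt hN) (ne_of_gt hM)]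
  have h1 : ((cls σ (σ i)).card : ℝ) * (∑ j' ∈ cls π (π j), A i j')
      = ∑ i' ∈ cls σ (σ i), ∑ j' ∈ cls π (π j), A i' j' := by
    rw [Finset.sum_congr rfl fun i' hi' => hArowConst (π j) i' i (mem_cls.1 hi'),
      Finset.sum_const, nsmul_eq_mul]
  have h2 : ∑ i' ∈ cls σ (σ i), ∑ j' ∈ cls π (π j), A i' j'
      = ∑ j' ∈ cls π (π j), ∑ i' ∈ cls σ (σ i), A i' j' := Finset.sum_comm
  have h3 : ∑ j' ∈ cls π (π j), ∑ i' ∈ cls σ (σ i), A i' j'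
      = ((cls π (π j)).card : ℝ) * (∑ i' ∈ cls σ (σ i), A i' j) := by
    rw [Finset.sum_congr rfl fun j' hj' => hAcolConst (σ i) j' j (mem_cls.1 hj'),
      Finset.sum_const, nsmul_eq_mul]
  have := h1.trans (h2.trans h3)
  linarith

/-- Two matrices with equal class row sums have equal products with `P`. -/
lemma AP_congr {m n t : ℕ} (π : Fin n → Fin t) (A1 A2 : Matrix (Fin m) (Fin n) ℝ)
    (h : ∀ (q : Fin t) (i : Fin m),
      ∑ j' ∈ cls π q, A1 i j' = ∑ j' ∈ cls π q, A2 i j') :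
    A1 * P π = A2 * P π := by
  ext i j
  rw [AP_entry, AP_entry, h]

/-- Rows of `Q * P` are constant on classes. -/
lemma QP_rowConst {n t : ℕ} (π : Fin n → Fin t) (Q : Matrix (Fin n) (Fin n) ℝ)
    (hQConst : ∀ (q' : Fin t) (j j₂ : Fin n), π j = π j₂ →
      ∑ j' ∈ cls π q', Q j j' = ∑ j' ∈ cls π q', Q j₂ j')
    (x : Fin n → ℝ) {j j₂ : Fin n} (h : π j = π j₂) :
    (Q * P π).mulVec x j = (Q * P π).mulVec x j₂ := by
  simp only [Matrix.mulVec, dotProduct]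
  exact Finset.sum_congr rfl fun j'' _ => by
    rw [AP_entry, AP_entry, hQConst (π j'') j j₂ h]

end LCQPAux

namespace LCQPAux

open Matrix

lemma key {m n s t : ℕ} (σ : Fin m → Fin s) (hσ : Function.Surjective σ)
    (π : Fin n → Fin t) (hπ : Function.Surjective π)
    (A1 A2 : Matrix (Fin m) (Fin n) ℝ) (b : Fin m → ℝ) (o : Fin m → CmpOp)
    (c : Fin n → ℝ) (Q1 Q2 : Matrix (Fin n) (Fin n) ℝ)
    (l : Fin n → WithBot ℝ) (u : Fin n → WithTop ℝ)
    (hQ1 : Q1.PosSemidef)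
    (hbConst : ∀ i i₂ : Fin m, σ i = σ i₂ → b i = b i₂ ∧ o i = o i₂)
    (hcluConst : ∀ j j₂ : Fin n, π j = π j₂ → c j = c j₂ ∧ l j = l j₂ ∧ u j = u j₂)
    (hArowConst : ∀ (q : Fin t) (i i₂ : Fin m), σ i = σ i₂ →
      ∑ j' ∈ cls π q, A1 i j' = ∑ j' ∈ cls π q, A1 i₂ j')
    (hAcolConst : ∀ (p : Fin s) (j j₂ : Fin n), π j = π j₂ →
      ∑ i' ∈ cls σ p, A1 i' j = ∑ i' ∈ cls σ p, A1 i' j₂)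
    (hQ1Const : ∀ (q' : Fin t) (j j₂ : Fin n), π j = π j₂ →
      ∑ j' ∈ cls π q', Q1 j j' = ∑ j' ∈ cls π q', Q1 j₂ j')
    (hA12 : ∀ (q : Fin t) (i : Fin m),
      ∑ j' ∈ cls π q, A1 i j' = ∑ j' ∈ cls π q, A2 i j')
    (hQ12 : ∀ (q' : Fin t) (j : Fin n),
      ∑ j' ∈ cls π q', Q1 j j' = ∑ j' ∈ cls π q', Q2 j j') :
    LCQPValue A2 b o c Q2 l u ≤ LCQPValue A1 b o c Q1 l u := by
  apply sInf_le_sInf_of_isCoinitialFor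
  rintro y ⟨x, hx, rfl⟩
  replace hx : LinFeasible A1 b o l u x := hx
  set v : Fin n → ℝ := (P π).mulVec x with hvdef
  -- feasibility of v for the second instance
  have hfeas : LinFeasible A2 b o l u v := by
    refine ⟨?_, ?_, ?_⟩
    · intro i
      have hA2v : A2.mulVec v i = (P σ).mulVec (A1.mulVec x) i := by
        rw [hvdef, Matrix.mulVec_mulVec, ← AP_congr π A1 A2 hA12,
          AP_eq_PA hσ hπ A1 hArowConst hAcolConst, ← Matrix.mulVec_mulVec]
      rw [hA2v, mulVec_P_apply]
      apply holds_avg _ _ _ (cls_card_pos hσ (σ i))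
      intro i' hi'
      obtain ⟨hb1, hb2⟩ := hbConst i' i (mem_cls.1 hi')
      rw [← hb1, ← hb2]
      exact hx.1 i'
    · intro j
      have hvj : v j = (∑ j' ∈ cls π (π j), x j') / (cls π (π j)).card :=
        mulVec_P_apply π x j
      cases hlj : l j with
      | bot => exact bot_le
      | coe a =>
        have ha : ∀ j' ∈ cls π (π j), CmpOp.ge.holds (x j') a := by
          intro j' hj'
          have h := hx.2.1 j'
          rw [(hcluConst j' j (mem_cls.1 hj')).2.1, hlj] at h
          exact_mod_cast h
        have := holds_avg .ge a _ (cls_card_pos hπ (π j)) _ ha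
        rw [hvj]
        exact_mod_cast (this : a ≤ _)
    · intro j
      have hvj : v j = (∑ j' ∈ cls π (π j), x j') / (cls π (π j)).card :=
        mulVec_P_apply π x j
      cases huj : u j with
      | top => exact le_top
      | coe a =>
        have ha : ∀ j' ∈ cls π (π j), CmpOp.le.holds (x j') a := by
          intro j' hj'
          have h := hx.2.2 j'
          rw [(hcluConst j' j (mem_cls.1 hj')).2.2, huj] at h
          exact_mod_cast h
        have := holds_avg .le a _ (cls_card_pos hπ (π j)) _ ha
        rw [hvj]
        exact_mod_cast (this : _ ≤ a)
  refine ⟨_, ⟨v, hfeas, rfl⟩, ?_⟩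
  -- objective comparison
  rw [EReal.coe_le_coe_iff]
  have hcv : c ⬝ᵥ v = c ⬝ᵥ x :=
    dot_const_P hπ (fun j j₂ h => (hcluConst j j₂ h).1) x
  have hQ2v : Q2.mulVec v = Q1.mulVec v := by
    rw [hvdef, Matrix.mulVec_mulVec, Matrix.mulVec_mulVec,
      AP_congr π Q1 Q2 hQ12]
  have hsym : Q1ᵀ = Q1 := by
    have h := hQ1.1
    exact (Matrix.conjTranspose_eq_transpose_of_trivial Q1).symm.trans h
  set w : Fin n → ℝ := x - v with hwdef
  have hzw : ∀ z : Fin n → ℝ, (∀ j j₂, π j = π j₂ → z j = z j₂) → z ⬝ᵥ w = 0 := by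
    intro z hz
    rw [hwdef, dotProduct_sub, hvdef, dot_const_P hπ hz x, sub_self]
  have hQ1vConst : ∀ j j₂, π j = π j₂ → Q1.mulVec v j = Q1.mulVec v j₂ := by
    intro j j₂ h
    rw [hvdef, Matrix.mulVec_mulVec]
    exact QP_rowConst π Q1 hQ1Const x h
  have h1 : v ⬝ᵥ Q1.mulVec w = 0 := by
    rw [Matrix.dotProduct_mulVec, ← Matrix.mulVec_transpose, hsym]
    exact hzw _ hQ1vConst
  have h2 : w ⬝ᵥ Q1.mulVec v = 0 := by
    rw [dotProduct_comm]
    exact hzw _ hQ1vConst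
  have h3 : 0 ≤ w ⬝ᵥ Q1.mulVec w := by
    have := hQ1.dotProduct_mulVec_nonneg w
    simpa using this
  have hxvw : x = v + w := by funext j; simp [hwdef]
  have hexp : x ⬝ᵥ Q1.mulVec x
      = v ⬝ᵥ Q1.mulVec v + v ⬝ᵥ Q1.mulVec w + (w ⬝ᵥ Q1.mulVec v + w ⬝ᵥ Q1.mulVec w) := by
    calc x ⬝ᵥ Q1.mulVec x = (v + w) ⬝ᵥ Q1.mulVec (v + w) := by rw [← hxvw]
    _ = _ := by rw [Matrix.mulVec_add, add_dotProduct, dotProduct_add, dotProduct_add]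
  have hquad : v ⬝ᵥ Q1.mulVec v ≤ x ⬝ᵥ Q1.mulVec x := by
    rw [hexp, h1, h2]; linarith
  have : v ⬝ᵥ Q2.mulVec v = v ⬝ᵥ Q1.mulVec v := by rw [hQ2v]
  rw [this, hcv]
  linarith

end LCQPAux

/-- If two LCQP instances (with `Q, Q̂` symmetric positive semidefinite) are related by
partitions `I` of the constraints and `J` of the variables as in conditions (i)–(v), then
they have the same optimal value in `ℝ∪{±∞}`. -/
theorem lcqp_value_eq_of_partitions {m n s t : ℕ} (hm : 1 ≤ m) (hn : 1 ≤ n)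
    (σ : Fin m → Fin s) (hσ : Function.Surjective σ)
    (π : Fin n → Fin t) (hπ : Function.Surjective π)
    (A Ahat : Matrix (Fin m) (Fin n) ℝ) (b bhat : Fin m → ℝ) (o ohat : Fin m → CmpOp)
    (c chat : Fin n → ℝ) (Q Qhat : Matrix (Fin n) (Fin n) ℝ)
    (l lhat : Fin n → WithBot ℝ) (u uhat : Fin n → WithTop ℝ)
    (hQ : Q.PosSemidef) (hQhat : Qhat.PosSemidef)
    -- (i)
    (hb : ∀ i, b i = bhat i ∧ o i = ohat i)
    (hbConst : ∀ i i₂ : Fin m, σ i = σ i₂ → b i = b i₂ ∧ o i = o i₂)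
    -- (ii)
    (hclu : ∀ j, c j = chat j ∧ l j = lhat j ∧ u j = uhat j)
    (hcluConst : ∀ j j₂ : Fin n, π j = π j₂ → c j = c j₂ ∧ l j = l j₂ ∧ u j = u j₂)
    -- (iii)
    (hArow : ∀ (q : Fin t) (i : Fin m),
      ∑ j ∈ Finset.univ.filter (fun j => π j = q), A i j =
      ∑ j ∈ Finset.univ.filter (fun j => π j = q), Ahat i j)
    (hArowConst : ∀ (q : Fin t) (i i₂ : Fin m), σ i = σ i₂ →
      ∑ j ∈ Finset.univ.filter (fun j => π j = q), A i j =
      ∑ j ∈ Finset.univ.filter (fun j => π j = q), A i₂ j)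
    -- (iv)
    (hAcol : ∀ (p : Fin s) (j : Fin n),
      ∑ i ∈ Finset.univ.filter (fun i => σ i = p), A i j =
      ∑ i ∈ Finset.univ.filter (fun i => σ i = p), Ahat i j)
    (hAcolConst : ∀ (p : Fin s) (j j₂ : Fin n), π j = π j₂ →
      ∑ i ∈ Finset.univ.filter (fun i => σ i = p), A i j =
      ∑ i ∈ Finset.univ.filter (fun i => σ i = p), A i j₂)
    -- (v)
    (hQeq : ∀ (q' : Fin t) (j : Fin n),
      ∑ j' ∈ Finset.univ.filter (fun j' => π j' = q'), Q j j' =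
      ∑ j' ∈ Finset.univ.filter (fun j' => π j' = q'), Qhat j j')
    (hQConst : ∀ (q' : Fin t) (j j₂ : Fin n), π j = π j₂ →
      ∑ j' ∈ Finset.univ.filter (fun j' => π j' = q'), Q j j' =
      ∑ j' ∈ Finset.univ.filter (fun j' => π j' = q'), Q j₂ j') :
    LCQPValue A b o c Q l u = LCQPValue Ahat bhat ohat chat Qhat lhat uhat := by

  have hbe : b = bhat := funext fun i => (hb i).1
  have hoe : o = ohat := funext fun i => (hb i).2
  have hce : c = chat := funext fun j => (hclu j).1
  have hle : l = lhat := funext fun j => (hclu j).2.1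
  have hue : u = uhat := funext fun j => (hclu j).2.2
  subst hbe hoe hce hle hue
  have hArow' : ∀ (q : Fin t) (i : Fin m),
      ∑ j' ∈ LCQPAux.cls π q, A i j' = ∑ j' ∈ LCQPAux.cls π q, Ahat i j' := hArow
  have hArowConst' : ∀ (q : Fin t) (i i₂ : Fin m), σ i = σ i₂ →
      ∑ j' ∈ LCQPAux.cls π q, A i j' = ∑ j' ∈ LCQPAux.cls π q, A i₂ j' := hArowConst
  have hAcol' : ∀ (p : Fin s) (j : Fin n),
      ∑ i' ∈ LCQPAux.cls σ p, A i' j = ∑ i' ∈ LCQPAux.cls σ p, Ahat i' j := hAcol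
  have hAcolConst' : ∀ (p : Fin s) (j j₂ : Fin n), π j = π j₂ →
      ∑ i' ∈ LCQPAux.cls σ p, A i' j = ∑ i' ∈ LCQPAux.cls σ p, A i' j₂ := hAcolConst
  have hQeq' : ∀ (q' : Fin t) (j : Fin n),
      ∑ j' ∈ LCQPAux.cls π q', Q j j' = ∑ j' ∈ LCQPAux.cls π q', Qhat j j' := hQeq
  have hQConst' : ∀ (q' : Fin t) (j j₂ : Fin n), π j = π j₂ →
      ∑ j' ∈ LCQPAux.cls π q', Q j j' = ∑ j' ∈ LCQPAux.cls π q', Q j₂ j' := hQConst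
  have hArowConstHat : ∀ (q : Fin t) (i i₂ : Fin m), σ i = σ i₂ →
      ∑ j' ∈ LCQPAux.cls π q, Ahat i j' = ∑ j' ∈ LCQPAux.cls π q, Ahat i₂ j' :=
    fun q i i₂ h => by rw [← hArow' q i, ← hArow' q i₂]; exact hArowConst' q i i₂ h
  have hAcolConstHat : ∀ (p : Fin s) (j j₂ : Fin n), π j = π j₂ →
      ∑ i' ∈ LCQPAux.cls σ p, Ahat i' j = ∑ i' ∈ LCQPAux.cls σ p, Ahat i' j₂ :=
    fun p j j₂ h => by rw [← hAcol' p j, ← hAcol' p j₂]; exact hAcolConst' p j j₂ h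
  have hQConstHat : ∀ (q' : Fin t) (j j₂ : Fin n), π j = π j₂ →
      ∑ j' ∈ LCQPAux.cls π q', Qhat j j' = ∑ j' ∈ LCQPAux.cls π q', Qhat j₂ j' :=
    fun q' j j₂ h => by rw [← hQeq' q' j, ← hQeq' q' j₂]; exact hQConst' q' j j₂ h
  refine le_antisymm ?_ ?_
  · exact LCQPAux.key σ hσ π hπ Ahat A b o c Qhat Q l u hQhat hbConst hcluConst
      hArowConstHat hAcolConstHat hQConstHat
      (fun q i => (hArow' q i).symm) (fun q' j => (hQeq' q' j).symm)
  · exact LCQPAux.key σ hσ π hπ A Ahat b o c Q Qhat l u hQ hbConst hcluConst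
      hArowConst' hAcolConst' hQConst' hArow' hQeq'
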